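/- Let D be an integral domain with quotient field K and n a positive integer. Then Int(Mₙ(D)) equals the intersection, over all monic polynomials p ∈ D[X] of degree n, of the rings Int(Mₙᵖ(D), Mₙ(D)). Equivalently, f ∈ K[X] is integer-valued on all of Mₙ(D) if and only if, writing f = g/d with g ∈ D[X] and d ∈ D \ {0}, the polynomial g is divisible modulo dD[X] by every monic polynomial p ∈ D[X] of degree n. -/

import Mathlib

open Polynomial

/-- `IntOn D K S` is the set of polynomials `f ∈ K[X]` that are integer-valued on the set
`S ⊆ Mₙ(D)`: for every `M ∈ S`, evaluating `f` at the image of `M` in `Mₙ(K)` yields a matrix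
all of whose entries lie in (the image of) `D`. -/
def IntOn (D K : Type*) [CommRing D] [Field K] [Algebra D K] {n : ℕ}
    (S : Set (Matrix (Fin n) (Fin n) D)) : Set (Polynomial K) :=
  {f | ∀ M ∈ S, ∀ i j, ∃ d : D,
    algebraMap D K d = (Polynomial.aeval (M.map (algebraMap D K)) f) i j}

section Aux
variable {D K : Type*} [CommRing D] [IsDomain D] [Field K] [Algebra D K] [IsFractionRing D K]

lemma charpoly_companion {p : D[X]} (hp : p.Monic) :
    (Algebra.leftMulMatrix (AdjoinRoot.powerBasis' hp).basis (AdjoinRoot.root p)).charpoly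
      = p := by
  set b := (AdjoinRoot.powerBasis' hp).basis
  set N := Algebra.leftMulMatrix b (AdjoinRoot.root p) with hN
  have hmonic := N.charpoly_monic
  have hdvd : p ∣ N.charpoly := by
    rw [← AdjoinRoot.mk_eq_zero, ← AdjoinRoot.aeval_eq]
    apply Algebra.leftMulMatrix_injective b
    rw [map_zero, ← Polynomial.aeval_algHom_apply]
    exact N.aeval_self_charpoly
  have hdeg : N.charpoly.natDegree = p.natDegree := by
    rw [Matrix.charpoly_natDegree_eq_dim, Fintype.card_fin, AdjoinRoot.powerBasis'_dim]
  obtain ⟨c, hc⟩ := hdvd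
  have hcm : c.Monic := hp.of_mul_monic_left (hc ▸ hmonic)
  have hc0 : c.natDegree = 0 := by
    have := hdeg
    rw [hc, Polynomial.natDegree_mul hp.ne_zero hcm.ne_zero] at this
    omega
  rw [hc, hcm.natDegree_eq_zero.mp hc0, mul_one]

lemma aeval_map_matrix {n : ℕ} (M : Matrix (Fin n) (Fin n) D) (g : D[X]) :
    Polynomial.aeval (M.map (algebraMap D K)) (g.map (algebraMap D K))
      = (Polynomial.aeval M g).map (algebraMap D K) := by
  have := Polynomial.aeval_algHom_apply ((Algebra.ofId D K).mapMatrix (m := Fin n)) M g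
  simp [AlgHom.mapMatrix_apply, Polynomial.aeval_map_algebraMap, Algebra.ofId_apply] at this
  rw [Polynomial.aeval_map_algebraMap]
  exact this

lemma mem_span_of_intOn {n : ℕ} (hn : 0 < n) (f : K[X]) (g : D[X]) (d : D) (hd : d ≠ 0)
    (hfg : f * C (algebraMap D K d) = g.map (algebraMap D K))
    (p : D[X]) (hp : p.Monic) (hdeg : p.natDegree = n)
    (hf : f ∈ IntOn D K {M : Matrix (Fin n) (Fin n) D | M.charpoly = p}) :
    g ∈ Ideal.span {Polynomial.C d, p} := by
  subst hdeg
  set b := (AdjoinRoot.powerBasis' hp).basis with hb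
  set N : Matrix (Fin p.natDegree) (Fin p.natDegree) D :=
    Algebra.leftMulMatrix b (AdjoinRoot.root p) with hN
  have hchar : N.charpoly = p := charpoly_companion hp
  have key : ∀ i j, d ∣ (Polynomial.aeval N g) i j := by
    intro i j
    obtain ⟨c, hcij⟩ := hf N hchar i j
    refine ⟨c, IsFractionRing.injective D K ?_⟩
    have h1 : algebraMap D K ((Polynomial.aeval N g) i j)
        = (Polynomial.aeval (N.map (algebraMap D K)) (g.map (algebraMap D K))) i j := by
      rw [aeval_map_matrix, Matrix.map_apply]
    rw [h1, ← hfg, map_mul, aeval_C, Algebra.algebraMap_eq_smul_one, mul_smul_comm, mul_one,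
      Matrix.smul_apply, smul_eq_mul, ← hcij, ← map_mul]
  -- column 0 of `aeval N g` computes the coefficients of `g %ₘ p`
  have hcol : ∀ i : Fin p.natDegree,
      (Polynomial.aeval N g) i ⟨0, hn⟩ = (g %ₘ p).coeff i := by
    intro i
    have hA : Polynomial.aeval N g = Algebra.leftMulMatrix b (AdjoinRoot.mk p g) := by
      rw [← AdjoinRoot.aeval_eq, ← Polynomial.aeval_algHom_apply]
      rfl
    have hone : b ⟨0, hn⟩ = 1 := by
      have := (AdjoinRoot.powerBasis' hp).basis_eq_pow ⟨0, hn⟩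
      exact this.trans (pow_zero _)
    have hbb : b = AdjoinRoot.powerBasisAux' hp := rfl
    rw [hA]
    erw [Algebra.leftMulMatrix_eq_repr_mul]
    erw [hone, mul_one, hbb]
    show ((AdjoinRoot.modByMonicHom hp) ((AdjoinRoot.mk p) g)).coeff ↑i = (g %ₘ p).coeff ↑i
    rw [AdjoinRoot.modByMonicHom_mk]
  have hdvd_coeff : ∀ k, d ∣ (g %ₘ p).coeff k := by
    intro k
    by_cases hk : k < p.natDegree
    · have := key ⟨k, hk⟩ ⟨0, hn⟩
      rwa [hcol ⟨k, hk⟩] at this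
    · rw [Polynomial.coeff_eq_zero_of_degree_lt]
      · exact dvd_zero d
      · exact lt_of_lt_of_le (Polynomial.degree_modByMonic_lt g hp)
          (le_trans (Polynomial.degree_le_natDegree)
            (by exact_mod_cast Nat.le_of_not_lt hk))
  obtain ⟨h, hh⟩ := (Polynomial.C_dvd_iff_dvd_coeff d _).mpr hdvd_coeff
  refine Ideal.mem_span_pair.mpr ⟨h, g /ₘ p, ?_⟩
  rw [mul_comm h, mul_comm (g /ₘ p), ← hh, Polynomial.modByMonic_add_div g p]


lemma map_matrix_mul_algebraMap {n : ℕ} (A : Matrix (Fin n) (Fin n) D) (d : D) :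
    (A * algebraMap D (Matrix (Fin n) (Fin n) D) d).map (algebraMap D K)
      = A.map (algebraMap D K)
        * algebraMap K (Matrix (Fin n) (Fin n) K) (algebraMap D K d) := by
  rw [Algebra.algebraMap_eq_smul_one, Algebra.algebraMap_eq_smul_one,
    mul_smul_comm, mul_one, mul_smul_comm, mul_one]
  ext i j
  simp [Matrix.map_apply]

lemma intOn_of_span {n : ℕ} (f : K[X]) (g : D[X]) (d : D) (hd : d ≠ 0)
    (hfg : f * C (algebraMap D K d) = g.map (algebraMap D K))
    (hspan : ∀ p : D[X], p.Monic → p.natDegree = n → g ∈ Ideal.span {Polynomial.C d, p}) :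
    f ∈ IntOn D K (Set.univ : Set (Matrix (Fin n) (Fin n) D)) := by
  intro M _ i j
  obtain ⟨u, v, huv⟩ := Ideal.mem_span_pair.mp
    (hspan M.charpoly M.charpoly_monic (by simp))
  refine ⟨(Polynomial.aeval M u) i j, ?_⟩
  have hd' : algebraMap D K d ≠ 0 := fun h => hd (IsFractionRing.injective D K (by simpa using h))
  have hu : IsUnit (algebraMap K (Matrix (Fin n) (Fin n) K) (algebraMap D K d)) :=
    hd'.isUnit.map (algebraMap K (Matrix (Fin n) (Fin n) K))
  have E : Polynomial.aeval (M.map (algebraMap D K)) f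
        * algebraMap K (Matrix (Fin n) (Fin n) K) (algebraMap D K d)
      = ((Polynomial.aeval M u).map (algebraMap D K))
        * algebraMap K (Matrix (Fin n) (Fin n) K) (algebraMap D K d) := by
    calc Polynomial.aeval (M.map (algebraMap D K)) f
          * algebraMap K (Matrix (Fin n) (Fin n) K) (algebraMap D K d)
        = Polynomial.aeval (M.map (algebraMap D K)) (f * C (algebraMap D K d)) := by
          rw [map_mul, aeval_C]
      _ = (Polynomial.aeval M g).map (algebraMap D K) := by rw [hfg, aeval_map_matrix]
      _ = ((Polynomial.aeval M u).map (algebraMap D K))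
            * algebraMap K (Matrix (Fin n) (Fin n) K) (algebraMap D K d) := by
          rw [← huv, map_add, map_mul, map_mul, aeval_C, M.aeval_self_charpoly, mul_zero,
            add_zero, map_matrix_mul_algebraMap]
  rw [hu.mul_right_cancel E, Matrix.map_apply]

end Aux

/-- Let `D` be a domain with quotient field `K` and `n` positive.  Then
`Int(Mₙ(D))` equals the intersection over all monic `p ∈ D[X]` of degree `n` of the rings
`Int(Mₙᵖ(D), Mₙ(D))`.  Equivalently, writing `f = g/d` with `g ∈ D[X]`, `d ∈ D \ {0}`,
`f` is integer-valued on all of `Mₙ(D)` iff `g` is divisible modulo `dD[X]` by every monic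
polynomial `p ∈ D[X]` of degree `n`. -/
theorem intOn_univ_eq_iInter_charpoly (D K : Type*) [CommRing D] [IsDomain D] [Field K]
    [Algebra D K] [IsFractionRing D K] (n : ℕ) (hn : 0 < n) :
    (IntOn D K (Set.univ : Set (Matrix (Fin n) (Fin n) D)) =
      ⋂ p ∈ {p : D[X] | p.Monic ∧ p.natDegree = n},
        IntOn D K {M : Matrix (Fin n) (Fin n) D | M.charpoly = p}) ∧
    (∀ (f : K[X]) (g : D[X]) (d : D), d ≠ 0 →
      f * C (algebraMap D K d) = g.map (algebraMap D K) →
      (f ∈ IntOn D K (Set.univ : Set (Matrix (Fin n) (Fin n) D)) ↔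
        ∀ p : D[X], p.Monic → p.natDegree = n → g ∈ Ideal.span {Polynomial.C d, p})) := by
  constructor
  · ext f
    simp only [Set.mem_iInter]
    constructor
    · intro hf p _ M _ i j
      exact hf M trivial i j
    · intro hf M _ i j
      exact hf M.charpoly ⟨M.charpoly_monic, by simp⟩ M rfl i j
  · intro f g d hd hfg
    constructor
    · intro hf p hp hdeg
      refine mem_span_of_intOn hn f g d hd hfg p hp hdeg ?_
      intro M _ i j
      exact hf M trivial i j
    · intro h
      exact intOn_of_span f g d hd hfg h
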